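/- Let e⁰ ∈ V be arbitrary and let Ξ⁰, Ξ¹, Ξ², Ξ³ ∈ V. If Σ_{j,k} ε_{ijk}·e^j∧Ξ^k = 0 for i = 1,2,3 and Ξ⁰∧e^j − Ξ^j∧e⁰ = 0 for j = 1,2,3, then Ξ^I = 0 for every I ∈ {0,1,2,3}. (This is the uniqueness statement used in the paper to conclude that on the constraint submanifold the only solution of the homogeneous system (3.40)–(3.41) is Ξ^I = 0, yielding Z_e^I = De_t^I − ω_t^I{}_J e^J.) -/

import Mathlib

open ExteriorAlgebra

noncomputable section

/-- 3-index Levi-Civita symbol on `Fin 3`, normalized so that `ε₁₂₃ = 1`. -/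
def lc3 (i j k : Fin 3) : ℝ :=
  ((j.val : ℝ) - (i.val : ℝ)) * ((k.val : ℝ) - (i.val : ℝ)) * ((k.val : ℝ) - (j.val : ℝ)) / 2

def coordAlt {V : Type*} [AddCommGroup V] [Module ℝ V] (b : Module.Basis (Fin 3) ℝ V)
    (p q : Fin 3) : V [⋀^Fin 2]→ₗ[ℝ] ℝ :=
  (Matrix.detRowAlternating (n := Fin 2) (R := ℝ)).compLinearMap
    (LinearMap.pi ![b.coord p, b.coord q])

lemma coordAlt_apply {V : Type*} [AddCommGroup V] [Module ℝ V] (b : Module.Basis (Fin 3) ℝ V)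
    (p q : Fin 3) (x y : V) :
    coordAlt b p q ![x, y] = b.repr x p * b.repr y q - b.repr x q * b.repr y p := by
  rw [coordAlt, AlternatingMap.compLinearMap_apply]
  have harg : (fun i => (LinearMap.pi ![b.coord p, b.coord q]) (![x, y] i)) =
      ![![b.repr x p, b.repr x q], ![b.repr y p, b.repr y q]] := by
    funext i j
    fin_cases i <;> fin_cases j <;> simp [LinearMap.pi_apply]
  rw [harg]
  show Matrix.det (Matrix.of ![![b.repr x p, b.repr x q], ![b.repr y p, b.repr y q]]) = _
  rw [Matrix.det_fin_two_of]

lemma exists_coordMap (V : Type*) [AddCommGroup V] [Module ℝ V] (b : Module.Basis (Fin 3) ℝ V)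
    (p q : Fin 3) :
    ∃ L : ExteriorAlgebra ℝ V →ₗ[ℝ] ℝ, ∀ x y : V,
      L (ExteriorAlgebra.ι ℝ x * ExteriorAlgebra.ι ℝ y) =
        b.repr x p * b.repr y q - b.repr x q * b.repr y p := by
  classical
  refine ⟨liftAlternating (fun n =>
    match n with
    | 2 => coordAlt b p q
    | _ => 0), fun x y => ?_⟩
  have hx : ExteriorAlgebra.ι ℝ x * ExteriorAlgebra.ι ℝ y = ιMulti ℝ 2 ![x, y] := by
    simp [ExteriorAlgebra.ιMulti_apply, List.ofFn_succ]
  rw [hx, liftAlternating_apply_ιMulti]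
  exact coordAlt_apply b p q x y

/-- if `Ξ⁰,…,Ξ³ ∈ V` satisfy the homogeneous system
`Σ_{j,k} ε_{ijk}·e^j∧Ξ^k = 0` (for `i = 1,2,3`) and `Ξ⁰∧e^j − Ξ^j∧e⁰ = 0`
(for `j = 1,2,3`, with `e⁰ ∈ V` arbitrary), then `Ξ^I = 0` for every `I`. -/
theorem stmt_8 (V : Type*) [AddCommGroup V] [Module ℝ V] (b : Module.Basis (Fin 3) ℝ V) (e0 : V)
    (Ξ : Fin 4 → V)
    (h1 : ∀ i : Fin 3, ∑ j : Fin 3, ∑ k : Fin 3,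
      lc3 i j k • (ExteriorAlgebra.ι ℝ (b j) * ExteriorAlgebra.ι ℝ (Ξ k.succ)) = 0)
    (h2 : ∀ j : Fin 3,
      ExteriorAlgebra.ι ℝ (Ξ 0) * ExteriorAlgebra.ι ℝ (b j) -
        ExteriorAlgebra.ι ℝ (Ξ j.succ) * ExteriorAlgebra.ι ℝ e0 = 0) :
    ∀ I : Fin 4, Ξ I = 0 := by
  classical
  choose L hL using fun p q => exists_coordMap V b p q
  have E : ∀ i p q : Fin 3, ∑ j : Fin 3, ∑ k : Fin 3,
      lc3 i j k * (b.repr (b j) p * b.repr (Ξ k.succ) q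
        - b.repr (b j) q * b.repr (Ξ k.succ) p) = 0 := by
    intro i p q
    have h := congrArg (L p q) (h1 i)
    simpa only [map_sum, map_smul, smul_eq_mul, map_zero, hL] using h
  have e1 := E 0 0 1
  have e2 := E 0 0 2
  have e3 := E 0 1 2
  have e4 := E 1 0 1
  have e5 := E 1 0 2
  have e6 := E 1 1 2
  have e7 := E 2 0 1
  have e8 := E 2 0 2
  have e9 := E 2 1 2
  simp only [Fin.sum_univ_three, lc3, Module.Basis.repr_self, Finsupp.single_apply] at e1 e2 e3 e4 e5 e6 e7 e8 e9
  norm_num [Fin.ext_iff] at e1 e2 e3 e4 e5 e6 e7 e8 e9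
  have hs2 : (Fin.succ 2 : Fin 4) = 3 := rfl
  rw [hs2] at e1 e3 e4 e5
  have z1 : Ξ 1 = 0 := by
    refine b.ext_elem fun m => ?_
    simp only [map_zero, Finsupp.coe_zero, Pi.zero_apply]
    fin_cases m
    · show b.repr (Ξ 1) 0 = 0; linarith
    · show b.repr (Ξ 1) 1 = 0; linarith
    · show b.repr (Ξ 1) 2 = 0; linarith
  have z2 : Ξ 2 = 0 := by
    refine b.ext_elem fun m => ?_
    simp only [map_zero, Finsupp.coe_zero, Pi.zero_apply]
    fin_cases m
    · show b.repr (Ξ 2) 0 = 0; linarith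
    · show b.repr (Ξ 2) 1 = 0; linarith
    · show b.repr (Ξ 2) 2 = 0; linarith
  have z3 : Ξ 3 = 0 := by
    refine b.ext_elem fun m => ?_
    simp only [map_zero, Finsupp.coe_zero, Pi.zero_apply]
    fin_cases m
    · show b.repr (Ξ 3) 0 = 0; linarith
    · show b.repr (Ξ 3) 1 = 0; linarith
    · show b.repr (Ξ 3) 2 = 0; linarith
  have h0 : ∀ j : Fin 3, ExteriorAlgebra.ι ℝ (Ξ 0) * ExteriorAlgebra.ι ℝ (b j) = 0 := by
    intro j
    have hj := h2 j
    have hz : Ξ j.succ = 0 := by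
      fin_cases j
      · exact z1
      · exact z2
      · exact z3
    rw [hz] at hj
    simpa using hj
  have g : ∀ p q j : Fin 3,
      b.repr (Ξ 0) p * b.repr (b j) q - b.repr (Ξ 0) q * b.repr (b j) p = 0 := by
    intro p q j
    rw [← hL p q, h0 j, map_zero]
  have g1 := g 0 1 1
  have g2 := g 1 0 0
  have g3 := g 2 0 0
  simp only [Module.Basis.repr_self, Finsupp.single_apply] at g1 g2 g3
  norm_num [Fin.ext_iff] at g1 g2 g3
  have z0 : Ξ 0 = 0 := by
    refine b.ext_elem fun m => ?_
    simp only [map_zero, Finsupp.coe_zero, Pi.zero_apply]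
    fin_cases m
    · show b.repr (Ξ 0) 0 = 0; linarith
    · show b.repr (Ξ 0) 1 = 0; linarith
    · show b.repr (Ξ 0) 2 = 0; linarith
  intro I
  fin_cases I
  · exact z0
  · exact z1
  · exact z2
  · exact z3

end
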